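/- For every integer n with |n| > 2, the number n²−4 is positive and not a perfect square, and in the real quadratic field ℚ(√(n²−4)) the two conjugate elements (n+√(n²−4))/2 and (n−√(n²−4))/2 are units of the ring of integers whose sum equals n. In particular, every integer n with |n| > 2 is a sum of two units of the ring of integers of some real quadratic field. -/

import Mathlib

open NumberField IntermediateField

/-- The real embedding of the ring of integers of a subfield of `ℝ`. -/
noncomputable def emb (L : IntermediateField ℚ ℝ) (x : 𝓞 L) : ℝ := ((x : L) : ℝ)

/-- The real quadratic field `ℚ(√(n²-4))`. -/
noncomputable def Ln (n : ℤ) : IntermediateField ℚ ℝ := ℚ⟮(Real.sqrt ((n : ℝ) ^ 2 - 4))⟯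

lemma int_aux {K : Type*} [Field K] (x y : K) (n : ℤ) (hs : x + y = (n : K))
    (hm : x * y = 1) : IsIntegral ℤ x := by
  refine ⟨Polynomial.X ^ 2 - Polynomial.C n * Polynomial.X + 1, ?_, ?_⟩
  · monicity!
  · simp only [Polynomial.eval₂_add, Polynomial.eval₂_sub, Polynomial.eval₂_mul,
      Polynomial.eval₂_X, Polynomial.eval₂_pow, Polynomial.eval₂_C, Polynomial.eval₂_one,
      Polynomial.eval₂_X_pow]
    have : (algebraMap ℤ K) n = (n : K) := by simp
    rw [this, ← hs, ← hm]; ring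

/-- For `|n| > 2`, `n² - 4` is positive and not a square, and `(n ± √(n²-4))/2` are
units of the ring of integers of the real quadratic field `ℚ(√(n²-4))` summing to `n`. -/
theorem int_is_sum_of_two_units_of_some_real_quadratic_field
    (n : ℤ) (hn : 2 < |n|) :
    0 < n ^ 2 - 4 ∧ ¬ IsSquare (n ^ 2 - 4) ∧
      ∃ a b : (𝓞 (Ln n))ˣ,
        emb (Ln n) a = ((n : ℝ) + Real.sqrt ((n : ℝ) ^ 2 - 4)) / 2 ∧
        emb (Ln n) b = ((n : ℝ) - Real.sqrt ((n : ℝ) ^ 2 - 4)) / 2 ∧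
        (a : 𝓞 (Ln n)) + (b : 𝓞 (Ln n)) = (n : 𝓞 (Ln n)) := by
  have h3 : 3 ≤ |n| := hn
  have habs : |n| ^ 2 = n ^ 2 := sq_abs n
  have hpos : 0 < n ^ 2 - 4 := by nlinarith
  refine ⟨hpos, ?_, ?_⟩
  · rintro ⟨k, hk⟩
    have hk2 : n ^ 2 - 4 = |k| ^ 2 := by rw [hk]; rw [sq_abs]; ring
    have hk0 : 0 ≤ |k| := abs_nonneg k
    have hab : |k| < |n| := by
      by_contra h
      push_neg at h
      nlinarith [mul_le_mul h h (abs_nonneg n) hk0]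
    have h1 : |k| + 1 ≤ |n| := hab
    have h2 : (|k| + 1) * (|k| + 1) ≤ |n| * |n| := mul_le_mul h1 h1 (by linarith) (abs_nonneg n)
    nlinarith
  · set d : ℝ := (n : ℝ) ^ 2 - 4 with hd
    have hd0 : (0 : ℝ) ≤ d := by
      have : (0 : ℝ) < (n : ℤ) ^ 2 - 4 := by exact_mod_cast hpos
      push_cast at this ⊢; linarith
    have hsq : Real.sqrt d * Real.sqrt d = d := Real.mul_self_sqrt hd0
    have hmem : Real.sqrt d ∈ Ln n := IntermediateField.mem_adjoin_simple_self ℚ _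
    set s : Ln n := ⟨Real.sqrt d, hmem⟩ with hs
    have hcoes : (s : ℝ) = Real.sqrt d := rfl
    set α : Ln n := ((n : Ln n) + s) / 2 with hα
    set β : Ln n := ((n : Ln n) - s) / 2 with hβ
    have hcα : (α : ℝ) = ((n : ℝ) + Real.sqrt d) / 2 := by push_cast [hα]; rfl
    have hcβ : (β : ℝ) = ((n : ℝ) - Real.sqrt d) / 2 := by push_cast [hβ]; rfl
    have hinj : Function.Injective ((↑) : Ln n → ℝ) := Subtype.coe_injective
    have hsum : α + β = (n : Ln n) := by
      apply hinj; push_cast [hcα, hcβ]; ring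
    have hmul : α * β = 1 := by
      apply hinj; push_cast [hcα, hcβ]
      field_simp
      nlinarith [hsq]
    have hAint : IsIntegral ℤ α := int_aux α β n hsum hmul
    have hBint : IsIntegral ℤ β := int_aux β α n (by rw [add_comm]; exact hsum)
      (by rw [mul_comm]; exact hmul)
    set A : 𝓞 (Ln n) := ⟨α, hAint⟩ with hA
    set B : 𝓞 (Ln n) := ⟨β, hBint⟩ with hB
    have hABmul : A * B = 1 := by
      apply NumberField.RingOfIntegers.ext
      exact hmul
    have hBAmul : B * A = 1 := by rw [mul_comm]; exact hABmul
    refine ⟨Units.mkOfMulEqOne A B hABmul, Units.mkOfMulEqOne B A hBAmul, hcα, hcβ, ?_⟩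
    apply NumberField.RingOfIntegers.ext
    push_cast
    exact hsum
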